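/- Suppose the family {B_{m,n}} satisfies separated Weierstrass preparation in both kinds of variables. Then Weierstrass division in ρ_n holds: for all m ≥ 0, n ≥ 1, d ≥ 0, every f ∈ B_{m,n} regular in ρ_n of degree d, and every g ∈ B_{m,n}, there exist a unique q ∈ B_{m,n} and unique r_0,…,r_{d-1} ∈ B_{m,n-1} such that g = q·f + r_{d-1}ρ_n^{d-1} + ⋯ + r_1ρ_n + r_0. -/

import Mathlib

noncomputable section
open scoped Classical
open MvPowerSeries

namespace SCW

variable {B : Type*} [CommRing B]

/-- A variable of the two-kinds ambient: `Sum.inl i` is `ξ_{i+1}` and `Sum.inr j` is `ρ_{j+1}`.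
`varOK m n v` says that the variable `v` is one of `ξ_1,…,ξ_m,ρ_1,…,ρ_n`. -/
def varOK (m n : ℕ) : ℕ ⊕ ℕ → Prop := Sum.elim (· < m) (· < n)

/-- The action of a permutation of the variables on a separated power series. -/
def permute2 (e : Equiv.Perm (ℕ ⊕ ℕ)) (f : MvPowerSeries (ℕ ⊕ ℕ) B) :
    MvPowerSeries (ℕ ⊕ ℕ) B :=
  fun d => MvPowerSeries.coeff (Finsupp.equivMapDomain e d) f

/-- Coefficientwise reduction modulo the ideal `I`. -/
def red2 (I : Ideal B) : MvPowerSeries (ℕ ⊕ ℕ) B → MvPowerSeries (ℕ ⊕ ℕ) (B ⧸ I) :=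
  MvPowerSeries.map (Ideal.Quotient.mk I)

/-- The coefficient series `f̄_{μν}` of `(ξ'')^μ(ρ'')^ν` when `f` is written as a series in the
variables `ξ_i (i > m), ρ_j (j > n)` with coefficients series in `ξ_1,…,ξ_m,ρ_1,…,ρ_n`. -/
def slice2 (m n : ℕ) (μ : (ℕ ⊕ ℕ) →₀ ℕ) (f : MvPowerSeries (ℕ ⊕ ℕ) B) :
    MvPowerSeries (ℕ ⊕ ℕ) B :=
  fun d => if (∀ v ∈ d.support, varOK m n v) then MvPowerSeries.coeff (d + μ) f else 0

/-- The coefficient (a series in `ξ` only) of `ρ^μ` in `f`, viewing `f ∈ R[[ξ]][[ρ]]`. -/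
def sliceRho {R : Type*} [CommRing R] (μ : ℕ →₀ ℕ) (f : MvPowerSeries (ℕ ⊕ ℕ) R) :
    MvPowerSeries (ℕ ⊕ ℕ) R :=
  fun d => if (∀ j : ℕ, d (Sum.inr j) = 0)
    then MvPowerSeries.coeff (d + μ.mapDomain Sum.inr) f else 0

/-- `f` is (equal to) a polynomial in the `ξ`-variables only. -/
def IsPolyXi {R : Type*} [CommRing R] (f : MvPowerSeries (ℕ ⊕ ℕ) R) : Prop :=
  ∃ p : MvPolynomial (ℕ ⊕ ℕ) R, (∀ v ∈ p.vars, ∃ i : ℕ, v = Sum.inl i) ∧ f = ↑p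

/-- A family `{B_{m,n}}` of subalgebras
`B[ξ_1,…,ξ_m,ρ_1,…,ρ_n] ⊆ B_{m,n} ⊆ B_{m',n'} ⊆ B[[ξ_1,…,ξ_{m'},ρ_1,…,ρ_{n'}]]`, closed under
permutations of the `ξ`'s and of the `ρ`'s, satisfying condition (*) (coefficients of
`f ∈ B_{m',n'}` written as a series in `(ξ'',ρ'')` lie in `B_{m,n}`) and condition (**)
(`(B/I)[ξ,ρ] ⊆ B̃_{m,n} ⊆ (B/I)[ξ][[ρ]]`). -/
structure SepFamily (B : Type u) [CommRing B] (I : Ideal B) : Type u where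
  Bmn : ℕ → ℕ → Subalgebra B (MvPowerSeries (ℕ ⊕ ℕ) B)
  mono : ∀ {m n m' n' : ℕ}, m ≤ m' → n ≤ n' → Bmn m n ≤ Bmn m' n'
  varsBelow : ∀ m n, ∀ f ∈ Bmn m n, ∀ d : (ℕ ⊕ ℕ) →₀ ℕ,
    (∃ v ∈ d.support, ¬ varOK m n v) → MvPowerSeries.coeff d f = 0
  poly_mem : ∀ m n (p : MvPolynomial (ℕ ⊕ ℕ) B), (∀ v ∈ p.vars, varOK m n v) →
    (↑p : MvPowerSeries (ℕ ⊕ ℕ) B) ∈ Bmn m n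
  permXi : ∀ m n (e : Equiv.Perm ℕ), (∀ i, m ≤ i → e i = i) →
    ∀ f ∈ Bmn m n, permute2 (Equiv.sumCongr e (Equiv.refl ℕ)) f ∈ Bmn m n
  permRho : ∀ m n (e : Equiv.Perm ℕ), (∀ j, n ≤ j → e j = j) →
    ∀ f ∈ Bmn m n, permute2 (Equiv.sumCongr (Equiv.refl ℕ) e) f ∈ Bmn m n
  slice_mem : ∀ {m n m' n' : ℕ}, m ≤ m' → n ≤ n' → ∀ μ : (ℕ ⊕ ℕ) →₀ ℕ,
    (∀ v ∈ μ.support, ¬ varOK m n v) → ∀ f ∈ Bmn m' n', slice2 m n μ f ∈ Bmn m n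
  red_upper : ∀ m n, ∀ f ∈ Bmn m n, ∀ μ : ℕ →₀ ℕ, IsPolyXi (sliceRho μ (red2 I f))
  red_lower : ∀ m n (q : MvPolynomial (ℕ ⊕ ℕ) (B ⧸ I)), (∀ v ∈ q.vars, varOK m n v) →
    ∃ f ∈ Bmn m n, red2 I f = ↑q

/-- `f ∈ B_{m,n}` is regular in `ξ_m` of degree `d`: `f̃` mod `(ρ_1,…,ρ_n)` is a monic
polynomial in `ξ_m` of degree `d` (with lower coefficients in `(B/I)[ξ_1,…,ξ_{m-1}]`). -/
def SepRegXi (I : Ideal B) (m n d : ℕ) (f : MvPowerSeries (ℕ ⊕ ℕ) B) : Prop :=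
  ∃ c : Fin d → MvPolynomial (ℕ ⊕ ℕ) (B ⧸ I),
    (∀ i, ∀ v ∈ (c i).vars, ∃ i' : ℕ, i' < m - 1 ∧ v = Sum.inl i') ∧
    ∀ e : (ℕ ⊕ ℕ) →₀ ℕ, (∀ j : ℕ, j < n → e (Sum.inr j) = 0) →
      MvPowerSeries.coeff e (red2 I f) =
      MvPowerSeries.coeff e
        ↑((MvPolynomial.X (Sum.inl (m - 1)) : MvPolynomial (ℕ ⊕ ℕ) (B ⧸ I)) ^ d
          + ∑ i : Fin d, c i * (MvPolynomial.X (Sum.inl (m - 1))) ^ (i : ℕ))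

/-- `f ∈ B_{m,n}` is regular in `ρ_n` of degree `d`:
`f̃ ≡ ρ_n^d mod (ρ_1,…,ρ_{n-1},ρ_n^{d+1})` in `(B/I)[ξ][[ρ]]`. -/
def SepRegRho (I : Ideal B) (n d : ℕ) (f : MvPowerSeries (ℕ ⊕ ℕ) B) : Prop :=
  ∀ e : (ℕ ⊕ ℕ) →₀ ℕ, (∀ j : ℕ, j < n - 1 → e (Sum.inr j) = 0) →
    (∀ j : ℕ, n ≤ j → e (Sum.inr j) = 0) → e (Sum.inr (n - 1)) ≤ d →
    MvPowerSeries.coeff e (red2 I f) =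
      if e = Finsupp.single (Sum.inr (n - 1)) d then 1 else 0

/-- Separated Weierstrass preparation in the variables of both kinds for `{B_{m,n}}`. -/
def SepHasWP {B : Type u} [CommRing B] {I : Ideal B} (ℬ : SepFamily B I) : Prop :=
  (∀ m n d : ℕ, 1 ≤ m → ∀ f ∈ ℬ.Bmn m n, SepRegXi I m n d f →
    ∃! ur : MvPowerSeries (ℕ ⊕ ℕ) B × (Fin d → MvPowerSeries (ℕ ⊕ ℕ) B),
      ur.1 ∈ ℬ.Bmn m n ∧ (∃ v ∈ ℬ.Bmn m n, ur.1 * v = 1) ∧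
      (∀ i, ur.2 i ∈ ℬ.Bmn (m - 1) n) ∧
      f = ur.1 * ((MvPowerSeries.X (Sum.inl (m - 1))) ^ d
        + ∑ i : Fin d, ur.2 i * (MvPowerSeries.X (Sum.inl (m - 1))) ^ (i : ℕ))) ∧
  (∀ m n d : ℕ, 1 ≤ n → ∀ f ∈ ℬ.Bmn m n, SepRegRho I n d f →
    ∃! ur : MvPowerSeries (ℕ ⊕ ℕ) B × (Fin d → MvPowerSeries (ℕ ⊕ ℕ) B),
      ur.1 ∈ ℬ.Bmn m n ∧ (∃ v ∈ ℬ.Bmn m n, ur.1 * v = 1) ∧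
      (∀ i, ur.2 i ∈ ℬ.Bmn m (n - 1)) ∧
      f = ur.1 * ((MvPowerSeries.X (Sum.inr (n - 1))) ^ d
        + ∑ i : Fin d, ur.2 i * (MvPowerSeries.X (Sum.inr (n - 1))) ^ (i : ℕ)))

end SCW
namespace SCW

open Finsupp MvPowerSeries

variable {R : Type*} [CommRing R]

lemma coeffFn (f : MvPowerSeries (ℕ ⊕ ℕ) R) (e : (ℕ ⊕ ℕ) →₀ ℕ) :
    MvPowerSeries.coeff e f = f e := rfl

lemma add_apply' (a b : MvPowerSeries (ℕ ⊕ ℕ) R) (e : (ℕ ⊕ ℕ) →₀ ℕ) :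
    (a + b) e = a e + b e := map_add (MvPowerSeries.coeff e) a b

lemma sub_apply' (a b : MvPowerSeries (ℕ ⊕ ℕ) R) (e : (ℕ ⊕ ℕ) →₀ ℕ) :
    (a - b) e = a e - b e := map_sub (MvPowerSeries.coeff e) a b

lemma zero_apply' (e : (ℕ ⊕ ℕ) →₀ ℕ) : (0 : MvPowerSeries (ℕ ⊕ ℕ) R) e = 0 :=
  map_zero (MvPowerSeries.coeff e)

lemma one_apply' (e : (ℕ ⊕ ℕ) →₀ ℕ) :
    (1 : MvPowerSeries (ℕ ⊕ ℕ) R) e = if e = 0 then 1 else 0 :=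
  MvPowerSeries.coeff_one e

lemma mul_apply' (a b : MvPowerSeries (ℕ ⊕ ℕ) R) (e : (ℕ ⊕ ℕ) →₀ ℕ) :
    (a * b) e = ∑ p ∈ Finset.HasAntidiagonal.antidiagonal e, a p.1 * b p.2 :=
  MvPowerSeries.coeff_mul e a b

lemma X_apply' (s : ℕ ⊕ ℕ) (e : (ℕ ⊕ ℕ) →₀ ℕ) :
    (MvPowerSeries.X s : MvPowerSeries (ℕ ⊕ ℕ) R) e = if e = single s 1 then 1 else 0 :=
  MvPowerSeries.coeff_X e s

lemma X_pow_apply' (s : ℕ ⊕ ℕ) (dd : ℕ) (e : (ℕ ⊕ ℕ) →₀ ℕ) :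
    ((MvPowerSeries.X s : MvPowerSeries (ℕ ⊕ ℕ) R) ^ dd) e = if e = single s dd then 1 else 0 :=
  MvPowerSeries.coeff_X_pow e s dd

lemma monomial_mul_apply' (n : (ℕ ⊕ ℕ) →₀ ℕ) (a : R) (φ : MvPowerSeries (ℕ ⊕ ℕ) R)
    (e : (ℕ ⊕ ℕ) →₀ ℕ) :
    (MvPowerSeries.monomial n a * φ) e = if n ≤ e then a * φ (e - n) else 0 :=
  MvPowerSeries.coeff_monomial_mul e n φ a

lemma mul_monomial_apply' (n : (ℕ ⊕ ℕ) →₀ ℕ) (a : R) (φ : MvPowerSeries (ℕ ⊕ ℕ) R)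
    (e : (ℕ ⊕ ℕ) →₀ ℕ) :
    (φ * MvPowerSeries.monomial n a) e = if n ≤ e then φ (e - n) * a else 0 :=
  MvPowerSeries.coeff_mul_monomial e n φ a

lemma slice2_apply (m n : ℕ) (μ : (ℕ ⊕ ℕ) →₀ ℕ) (f : MvPowerSeries (ℕ ⊕ ℕ) R)
    (e : (ℕ ⊕ ℕ) →₀ ℕ) :
    slice2 m n μ f e =
      if (∀ v ∈ e.support, varOK m n v) then MvPowerSeries.coeff (e + μ) f else 0 := rfl

lemma permute2_apply (ep : Equiv.Perm (ℕ ⊕ ℕ)) (f : MvPowerSeries (ℕ ⊕ ℕ) R)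
    (e : (ℕ ⊕ ℕ) →₀ ℕ) :
    permute2 ep f e = f (equivMapDomain ep e) := rfl

lemma coeff_permute2 (ep : Equiv.Perm (ℕ ⊕ ℕ)) (f : MvPowerSeries (ℕ ⊕ ℕ) R)
    (e : (ℕ ⊕ ℕ) →₀ ℕ) :
    MvPowerSeries.coeff e (permute2 ep f) = MvPowerSeries.coeff (equivMapDomain ep e) f := rfl

lemma X_as_monomial (s : ℕ ⊕ ℕ) :
    (MvPowerSeries.X s : MvPowerSeries (ℕ ⊕ ℕ) R) = MvPowerSeries.monomial (single s 1) 1 := by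
  rw [← MvPowerSeries.X_pow_eq s 1, pow_one]

lemma not_varOK_inr (m n c : ℕ) (hc : n ≤ c) : ¬ varOK m n (Sum.inr c) := by
  simp only [varOK, Sum.elim_inr]
  omega

lemma mem_support_left {p q e : (ℕ ⊕ ℕ) →₀ ℕ} (h : p + q = e) {v} (hv : v ∈ p.support) :
    v ∈ e.support := by
  rw [mem_support_iff] at hv ⊢
  subst h
  simp only [Finsupp.add_apply]
  omega

lemma slice2_zero_fun (m n : ℕ) (μ : (ℕ ⊕ ℕ) →₀ ℕ) :
    slice2 m n μ (0 : MvPowerSeries (ℕ ⊕ ℕ) R) = 0 := by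
  funext e
  rw [slice2_apply, zero_apply']
  simp only [map_zero, ite_self]

lemma slice2_add (m n : ℕ) (μ : (ℕ ⊕ ℕ) →₀ ℕ) (a b : MvPowerSeries (ℕ ⊕ ℕ) R) :
    slice2 m n μ (a + b) = slice2 m n μ a + slice2 m n μ b := by
  funext e
  rw [add_apply', slice2_apply, slice2_apply, slice2_apply]
  split
  · exact map_add _ a b
  · exact (add_zero 0).symm

/-- `slice2` as an additive monoid hom. -/
def slice2Add (m n : ℕ) (μ : (ℕ ⊕ ℕ) →₀ ℕ) :
    MvPowerSeries (ℕ ⊕ ℕ) R →+ MvPowerSeries (ℕ ⊕ ℕ) R where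
  toFun := slice2 m n μ
  map_zero' := slice2_zero_fun m n μ
  map_add' := slice2_add m n μ

lemma slice2_sum (m n : ℕ) (μ : (ℕ ⊕ ℕ) →₀ ℕ) {ι : Type*} (s : Finset ι)
    (F : ι → MvPowerSeries (ℕ ⊕ ℕ) R) :
    slice2 m n μ (∑ i ∈ s, F i) = ∑ i ∈ s, slice2 m n μ (F i) :=
  map_sum (slice2Add m n μ) F s

lemma slice2_mul (m n c : ℕ) (hc : n ≤ c) (k : ℕ) (a b : MvPowerSeries (ℕ ⊕ ℕ) R) :
    slice2 m n (single (Sum.inr c) k) (a * b)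
      = ∑ j ∈ Finset.range (k + 1),
          slice2 m n (single (Sum.inr c) j) a * slice2 m n (single (Sum.inr c) (k - j)) b := by
  have hbadc := not_varOK_inr m n c hc
  funext e
  rw [show ∀ (s : Finset ℕ) (F : ℕ → MvPowerSeries (ℕ ⊕ ℕ) R), (∑ j ∈ s, F j) e = ∑ j ∈ s, F j e from
    fun s F => map_sum (MvPowerSeries.coeff e) F s]
  by_cases hok : ∀ v ∈ e.support, varOK m n v
  · have hec : e (Sum.inr c) = 0 := by
      by_contra h
      exact hbadc (hok _ (mem_support_iff.mpr h))
    have hterm : ∀ j ∈ Finset.range (k + 1),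
        (slice2 m n (single (Sum.inr c) j) a * slice2 m n (single (Sum.inr c) (k - j)) b) e
          = ∑ p ∈ Finset.HasAntidiagonal.antidiagonal e,
              a (p.1 + single (Sum.inr c) j) * b (p.2 + single (Sum.inr c) (k - j)) := by
      intro j _
      rw [mul_apply']
      refine Finset.sum_congr rfl fun p hp => ?_
      rw [Finset.HasAntidiagonal.mem_antidiagonal] at hp
      have h1 : ∀ v ∈ p.1.support, varOK m n v := fun v hv => hok v (mem_support_left hp hv)
      have h2 : ∀ v ∈ p.2.support, varOK m n v := fun v hv =>
        hok v (mem_support_left (show p.2 + p.1 = e by rw [add_comm]; exact hp) hv)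
      rw [slice2_apply, slice2_apply, if_pos h1, if_pos h2, coeffFn, coeffFn]
    rw [Finset.sum_congr rfl hterm, ← Finset.sum_product']
    rw [slice2_apply, if_pos hok, MvPowerSeries.coeff_mul]
    have hre : (e + single (Sum.inr c) k).erase (Sum.inr c) = e := by
      rw [Finsupp.erase_add, Finsupp.erase_single, add_zero,
        Finsupp.erase_of_notMem_support (by rw [mem_support_iff]; simpa using hec)]
    refine Finset.sum_nbij'
      (i := fun (x : ((ℕ ⊕ ℕ) →₀ ℕ) × ((ℕ ⊕ ℕ) →₀ ℕ)) =>
        ((x.1 (Sum.inr c), (x.1.erase (Sum.inr c), x.2.erase (Sum.inr c))) :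
          ℕ × (((ℕ ⊕ ℕ) →₀ ℕ) × ((ℕ ⊕ ℕ) →₀ ℕ))))
      (j := fun (x : ℕ × (((ℕ ⊕ ℕ) →₀ ℕ) × ((ℕ ⊕ ℕ) →₀ ℕ))) =>
        ((x.2.1 + single (Sum.inr c) x.1, x.2.2 + single (Sum.inr c) (k - x.1)) :
          ((ℕ ⊕ ℕ) →₀ ℕ) × ((ℕ ⊕ ℕ) →₀ ℕ)))
      ?_ ?_ ?_ ?_ ?_
    · rintro ⟨p₁, p₂⟩ hp
      rw [Finset.HasAntidiagonal.mem_antidiagonal] at hp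
      have hsum : p₁ (Sum.inr c) + p₂ (Sum.inr c) = k := by
        have := congrArg (fun z => z (Sum.inr c)) hp
        simpa [Finsupp.add_apply, hec] using this
      have herase : p₁.erase (Sum.inr c) + p₂.erase (Sum.inr c) = e := by
        rw [← Finsupp.erase_add, hp, hre]
      simp only [Finset.mem_product, Finset.mem_range, Finset.HasAntidiagonal.mem_antidiagonal]
      exact ⟨by omega, herase⟩
    · rintro ⟨j, p₁, p₂⟩ hx
      simp only [Finset.mem_product, Finset.mem_range, Finset.HasAntidiagonal.mem_antidiagonal] at hx
      rw [Finset.HasAntidiagonal.mem_antidiagonal]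
      have h4 : (p₁ + single (Sum.inr c) j) + (p₂ + single (Sum.inr c) (k - j)) =
          (p₁ + p₂) + (single (Sum.inr c) j + single (Sum.inr c) (k - j)) := by
        rw [add_add_add_comm]
      rw [h4, hx.2, ← Finsupp.single_add]
      congr 2
      omega
    · rintro ⟨p₁, p₂⟩ hp
      rw [Finset.HasAntidiagonal.mem_antidiagonal] at hp
      have hsum : p₁ (Sum.inr c) + p₂ (Sum.inr c) = k := by
        have := congrArg (fun z => z (Sum.inr c)) hp
        simpa [Finsupp.add_apply, hec] using this
      simp only [Prod.mk.injEq]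
      refine ⟨Finsupp.erase_add_single _ _, ?_⟩
      have h5 : k - p₁ (Sum.inr c) = p₂ (Sum.inr c) := by omega
      rw [h5]
      exact Finsupp.erase_add_single _ _
    · rintro ⟨j, p₁, p₂⟩ hx
      simp only [Finset.mem_product, Finset.mem_range, Finset.HasAntidiagonal.mem_antidiagonal] at hx
      have h1 : p₁ (Sum.inr c) = 0 := by
        have := congrArg (fun z => z (Sum.inr c)) hx.2
        simp only [Finsupp.add_apply] at this
        rw [hec] at this
        omega
      have h2 : p₂ (Sum.inr c) = 0 := by
        have := congrArg (fun z => z (Sum.inr c)) hx.2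
        simp only [Finsupp.add_apply] at this
        rw [hec] at this
        omega
      simp only [Prod.mk.injEq]
      refine ⟨?_, ?_, ?_⟩
      · simp [Finsupp.add_apply, h1, Finsupp.single_eq_same]
      · rw [Finsupp.erase_add, Finsupp.erase_single, add_zero,
          Finsupp.erase_of_notMem_support (by rw [mem_support_iff]; simpa using h1)]
      · rw [Finsupp.erase_add, Finsupp.erase_single, add_zero,
          Finsupp.erase_of_notMem_support (by rw [mem_support_iff]; simpa using h2)]
    · rintro ⟨p₁, p₂⟩ hp
      rw [Finset.HasAntidiagonal.mem_antidiagonal] at hp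
      have hsum : p₁ (Sum.inr c) + p₂ (Sum.inr c) = k := by
        have := congrArg (fun z => z (Sum.inr c)) hp
        simpa [Finsupp.add_apply, hec] using this
      have e1 : p₁.erase (Sum.inr c) + single (Sum.inr c) (p₁ (Sum.inr c)) = p₁ :=
        Finsupp.erase_add_single _ _
      have e2 : p₂.erase (Sum.inr c) + single (Sum.inr c) (k - p₁ (Sum.inr c)) = p₂ := by
        have h5 : k - p₁ (Sum.inr c) = p₂ (Sum.inr c) := by omega
        rw [h5]
        exact Finsupp.erase_add_single _ _
      show MvPowerSeries.coeff p₁ a * MvPowerSeries.coeff p₂ b = _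
      rw [coeffFn, coeffFn]
      show a p₁ * b p₂ = a (p₁.erase (Sum.inr c) + single (Sum.inr c) (p₁ (Sum.inr c)))
        * b (p₂.erase (Sum.inr c) + single (Sum.inr c) (k - p₁ (Sum.inr c)))
      rw [e1, e2]
  · rw [slice2_apply, if_neg hok]
    symm
    refine Finset.sum_eq_zero fun j _ => ?_
    rw [mul_apply']
    refine Finset.sum_eq_zero fun p hp => ?_
    rw [Finset.HasAntidiagonal.mem_antidiagonal] at hp
    push_neg at hok
    obtain ⟨v, hv, hbad⟩ := hok
    have hor : v ∈ p.1.support ∨ v ∈ p.2.support := by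
      rw [mem_support_iff] at hv
      by_contra hcon
      push_neg at hcon
      rw [mem_support_iff, not_not] at hcon
      obtain ⟨hc1, hc2⟩ := hcon
      rw [mem_support_iff, not_not] at hc2
      have := congrArg (fun z => z v) hp
      simp only [Finsupp.add_apply, hc1, hc2] at this
      omega
    rcases hor with h | h
    · rw [slice2_apply m n (single (Sum.inr c) j) a p.1,
        if_neg (fun hall => hbad (hall v h)), zero_mul]
    · rw [slice2_apply m n (single (Sum.inr c) (k - j)) b p.2,
        if_neg (fun hall => hbad (hall v h)), mul_zero]

lemma slice2_of_apply_ne (m n c k : ℕ) (hk : k ≠ 0) (f : MvPowerSeries (ℕ ⊕ ℕ) R)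
    (h : ∀ e : (ℕ ⊕ ℕ) →₀ ℕ, e (Sum.inr c) ≠ 0 → MvPowerSeries.coeff e f = 0) :
    slice2 m n (single (Sum.inr c) k) f = 0 := by
  funext e
  rw [slice2_apply, zero_apply']
  split
  · apply h
    simp only [Finsupp.add_apply, Finsupp.single_eq_same]
    omega
  · rfl

lemma slice2_eq_self (m n : ℕ) (f : MvPowerSeries (ℕ ⊕ ℕ) R)
    (h : ∀ e : (ℕ ⊕ ℕ) →₀ ℕ, (∃ v ∈ e.support, ¬ varOK m n v) → MvPowerSeries.coeff e f = 0) :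
    slice2 m n 0 f = f := by
  funext e
  rw [slice2_apply, add_zero]
  split
  · rfl
  case isFalse hok =>
    push_neg at hok
    exact ((h e hok).symm : (0 : R) = f e)

lemma slice2_one (m n : ℕ) : slice2 m n 0 (1 : MvPowerSeries (ℕ ⊕ ℕ) R) = 1 := by
  apply slice2_eq_self
  intro e he
  obtain ⟨v, hv, -⟩ := he
  rw [MvPowerSeries.coeff_one, if_neg]
  intro h0
  rw [h0] at hv
  simp at hv

lemma slice2_X_mul_succ (m n c k : ℕ) (f : MvPowerSeries (ℕ ⊕ ℕ) R) :
    slice2 m n (single (Sum.inr c) (k + 1)) (MvPowerSeries.X (Sum.inr c) * f)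
      = slice2 m n (single (Sum.inr c) k) f := by
  funext e
  rw [slice2_apply, slice2_apply]
  split
  · rw [coeffFn, coeffFn, X_as_monomial, monomial_mul_apply', if_pos, one_mul]
    · congr 1
      ext w
      simp only [Finsupp.tsub_apply, Finsupp.add_apply, Finsupp.single_apply]
      split <;> omega
    · rw [Finsupp.single_le_iff]
      simp only [Finsupp.add_apply, Finsupp.single_eq_same]
      omega
  · rfl

lemma slice2_X_mul_zero (m n c : ℕ) (hc : n ≤ c) (f : MvPowerSeries (ℕ ⊕ ℕ) R) :
    slice2 m n 0 (MvPowerSeries.X (Sum.inr c) * f) = 0 := by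
  funext e
  rw [slice2_apply, zero_apply']
  split
  case isTrue hok =>
    have hec : e (Sum.inr c) = 0 := by
      by_contra h
      exact not_varOK_inr m n c hc (hok _ (mem_support_iff.mpr h))
    rw [add_zero, coeffFn, X_as_monomial, monomial_mul_apply', if_neg]
    rw [Finsupp.single_le_iff, hec]
    omega
  · rfl

lemma slice2_X_pow (m n c : ℕ) (hc : n ≤ c) (l dd : ℕ) :
    slice2 m n (single (Sum.inr c) l)
        ((MvPowerSeries.X (Sum.inr c) : MvPowerSeries (ℕ ⊕ ℕ) R) ^ dd)
      = if l = dd then 1 else 0 := by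
  funext e
  rw [slice2_apply]
  by_cases hok : ∀ v ∈ e.support, varOK m n v
  · have hec : e (Sum.inr c) = 0 := by
      by_contra h
      exact not_varOK_inr m n c hc (hok _ (mem_support_iff.mpr h))
    rw [if_pos hok, coeffFn, X_pow_apply']
    by_cases hl : l = dd
    · subst hl
      have hiff : e + single (Sum.inr c) l = single (Sum.inr c) l ↔ e = 0 := by
        constructor
        · intro h
          ext w
          have h7 := congrArg (fun z => z w) h
          simp only [Finsupp.add_apply] at h7
          simp only [Finsupp.coe_zero, Pi.zero_apply]
          omega
        · intro h
          rw [h, zero_add]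
      rw [if_pos rfl, one_apply']
      by_cases h0 : e = 0
      · rw [if_pos (hiff.mpr h0), if_pos h0]
      · rw [if_neg (fun hh => h0 (hiff.mp hh)), if_neg h0]
    · rw [if_neg hl, if_neg]
      · exact (zero_apply' e).symm
      · intro h
        have := congrArg (fun z => z (Sum.inr c)) h
        simp only [Finsupp.add_apply, Finsupp.single_eq_same, hec] at this
        omega
  · rw [if_neg hok]
    by_cases hl : l = dd
    · subst hl
      rw [if_pos rfl, one_apply', if_neg]
      intro h0
      rw [h0] at hok
      exact hok (by intro v hv; simp at hv)
    · rw [if_neg hl]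
      exact (zero_apply' e).symm

lemma slice2_level (m n : ℕ) (μ : (ℕ ⊕ ℕ) →₀ ℕ) (f : MvPowerSeries (ℕ ⊕ ℕ) R)
    (h : ∀ e : (ℕ ⊕ ℕ) →₀ ℕ, e (Sum.inr n) ≠ 0 → MvPowerSeries.coeff e f = 0) :
    slice2 m n μ f = slice2 m (n + 1) μ f := by
  funext e
  rw [slice2_apply, slice2_apply]
  by_cases g1 : ∀ v ∈ e.support, varOK m n v
  · rw [if_pos g1, if_pos]
    intro v hv
    cases v with
    | inl i => exact g1 _ hv
    | inr j => exact Nat.lt_succ_of_lt (g1 _ hv)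
  · rw [if_neg g1]
    by_cases g2 : ∀ v ∈ e.support, varOK m (n + 1) v
    · rw [if_pos g2]
      push_neg at g1
      obtain ⟨v, hv, hbad⟩ := g1
      have hvn : v = Sum.inr n := by
        have h2 := g2 v hv
        cases v with
        | inl i => exact absurd h2 hbad
        | inr j =>
          have hj1 : j < n + 1 := h2
          have hj2 : ¬ j < n := hbad
          congr 1
          omega
      symm
      apply h
      rw [hvn, mem_support_iff] at hv
      simp only [Finsupp.add_apply]
      omega
    · rw [if_neg g2]

/-! ### permute2 lemmas -/

lemma equivMapDomain_add' (ep : Equiv.Perm (ℕ ⊕ ℕ)) (p q : (ℕ ⊕ ℕ) →₀ ℕ) :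
    equivMapDomain ep (p + q) = equivMapDomain ep p + equivMapDomain ep q := by
  ext v
  simp [equivMapDomain_apply]

lemma equivMapDomain_symm_cancel (ep : Equiv.Perm (ℕ ⊕ ℕ)) (x : (ℕ ⊕ ℕ) →₀ ℕ) :
    equivMapDomain ep.symm (equivMapDomain ep x) = x := by
  ext v
  simp [equivMapDomain_apply]

lemma equivMapDomain_cancel_symm (ep : Equiv.Perm (ℕ ⊕ ℕ)) (x : (ℕ ⊕ ℕ) →₀ ℕ) :
    equivMapDomain ep (equivMapDomain ep.symm x) = x := by
  ext v
  simp [equivMapDomain_apply]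

lemma equivMapDomain_eq_zero_iff (ep : Equiv.Perm (ℕ ⊕ ℕ)) (x : (ℕ ⊕ ℕ) →₀ ℕ) :
    equivMapDomain ep x = 0 ↔ x = 0 := by
  constructor
  · intro h
    have h2 := congrArg (equivMapDomain ep.symm) h
    rw [equivMapDomain_symm_cancel] at h2
    rw [h2]
    ext v
    simp [equivMapDomain_apply]
  · intro h
    rw [h]
    ext v
    simp [equivMapDomain_apply]

lemma permute2_zero (ep : Equiv.Perm (ℕ ⊕ ℕ)) :
    permute2 ep (0 : MvPowerSeries (ℕ ⊕ ℕ) R) = 0 := by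
  funext e
  rw [permute2_apply, zero_apply', zero_apply']

lemma permute2_add (ep : Equiv.Perm (ℕ ⊕ ℕ)) (a b : MvPowerSeries (ℕ ⊕ ℕ) R) :
    permute2 ep (a + b) = permute2 ep a + permute2 ep b := by
  funext e
  rw [permute2_apply, add_apply', add_apply', permute2_apply, permute2_apply]

lemma permute2_one (ep : Equiv.Perm (ℕ ⊕ ℕ)) :
    permute2 ep (1 : MvPowerSeries (ℕ ⊕ ℕ) R) = 1 := by
  funext e
  rw [permute2_apply, one_apply', one_apply']
  by_cases h : e = 0
  · rw [if_pos ((equivMapDomain_eq_zero_iff ep e).mpr h), if_pos h]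
  · rw [if_neg (fun hh => h ((equivMapDomain_eq_zero_iff ep e).mp hh)), if_neg h]

lemma permute2_mul (ep : Equiv.Perm (ℕ ⊕ ℕ)) (a b : MvPowerSeries (ℕ ⊕ ℕ) R) :
    permute2 ep (a * b) = permute2 ep a * permute2 ep b := by
  funext e
  rw [permute2_apply, mul_apply', mul_apply']
  have hRHS : ∀ p : ((ℕ ⊕ ℕ) →₀ ℕ) × ((ℕ ⊕ ℕ) →₀ ℕ),
      permute2 ep a p.1 * permute2 ep b p.2
        = a (equivMapDomain ep p.1) * b (equivMapDomain ep p.2) := fun p => by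
    rw [permute2_apply, permute2_apply]
  rw [Finset.sum_congr rfl fun p _ => hRHS p]
  refine Finset.sum_nbij'
    (i := fun p => ((equivMapDomain ep.symm p.1, equivMapDomain ep.symm p.2) :
      ((ℕ ⊕ ℕ) →₀ ℕ) × ((ℕ ⊕ ℕ) →₀ ℕ)))
    (j := fun p => ((equivMapDomain ep p.1, equivMapDomain ep p.2) :
      ((ℕ ⊕ ℕ) →₀ ℕ) × ((ℕ ⊕ ℕ) →₀ ℕ))) ?_ ?_ ?_ ?_ ?_
  · rintro ⟨p₁, p₂⟩ hp
    rw [Finset.HasAntidiagonal.mem_antidiagonal] at hp ⊢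
    have h2 := congrArg (equivMapDomain ep.symm) hp
    rw [equivMapDomain_add', equivMapDomain_symm_cancel] at h2
    exact h2
  · rintro ⟨p₁, p₂⟩ hp
    rw [Finset.HasAntidiagonal.mem_antidiagonal] at hp ⊢
    rw [← equivMapDomain_add', hp]
  · rintro ⟨p₁, p₂⟩ _
    simp only [Prod.mk.injEq]
    exact ⟨equivMapDomain_cancel_symm ep p₁, equivMapDomain_cancel_symm ep p₂⟩
  · rintro ⟨p₁, p₂⟩ _
    simp only [Prod.mk.injEq]
    exact ⟨equivMapDomain_symm_cancel ep p₁, equivMapDomain_symm_cancel ep p₂⟩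
  · rintro ⟨p₁, p₂⟩ _
    show a p₁ * b p₂ = a (equivMapDomain ep (equivMapDomain ep.symm p₁))
      * b (equivMapDomain ep (equivMapDomain ep.symm p₂))
    rw [equivMapDomain_cancel_symm, equivMapDomain_cancel_symm]

/-- `permute2` as a ring hom. -/
def permRingHom (ep : Equiv.Perm (ℕ ⊕ ℕ)) :
    MvPowerSeries (ℕ ⊕ ℕ) R →+* MvPowerSeries (ℕ ⊕ ℕ) R where
  toFun := permute2 ep
  map_one' := permute2_one ep
  map_mul' := permute2_mul ep
  map_zero' := permute2_zero ep
  map_add' := permute2_add ep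

lemma permute2_pow (ep : Equiv.Perm (ℕ ⊕ ℕ)) (a : MvPowerSeries (ℕ ⊕ ℕ) R) (k : ℕ) :
    permute2 ep (a ^ k) = permute2 ep a ^ k :=
  map_pow (permRingHom ep) a k

lemma permute2_sum (ep : Equiv.Perm (ℕ ⊕ ℕ)) {ι : Type*} (s : Finset ι)
    (F : ι → MvPowerSeries (ℕ ⊕ ℕ) R) :
    permute2 ep (∑ i ∈ s, F i) = ∑ i ∈ s, permute2 ep (F i) :=
  map_sum (permRingHom ep) F s

lemma permute2_sub (ep : Equiv.Perm (ℕ ⊕ ℕ)) (a b : MvPowerSeries (ℕ ⊕ ℕ) R) :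
    permute2 ep (a - b) = permute2 ep a - permute2 ep b :=
  map_sub (permRingHom ep) a b

lemma permute2_neg (ep : Equiv.Perm (ℕ ⊕ ℕ)) (a : MvPowerSeries (ℕ ⊕ ℕ) R) :
    permute2 ep (- a) = - permute2 ep a :=
  map_neg (permRingHom ep) a

lemma permute2_X (ep : Equiv.Perm (ℕ ⊕ ℕ)) (v : ℕ ⊕ ℕ) :
    permute2 ep (MvPowerSeries.X v : MvPowerSeries (ℕ ⊕ ℕ) R) = MvPowerSeries.X (ep.symm v) := by
  funext e
  rw [permute2_apply, X_apply', X_apply']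
  have hiff : equivMapDomain ep e = single v 1 ↔ e = single (ep.symm v) 1 := by
    constructor
    · intro h
      have h2 := congrArg (equivMapDomain ep.symm) h
      rw [equivMapDomain_symm_cancel, equivMapDomain_single] at h2
      exact h2
    · intro h
      rw [h, equivMapDomain_single, Equiv.apply_symm_apply]
  by_cases h : e = single (ep.symm v) 1
  · rw [if_pos (hiff.mpr h), if_pos h]
  · rw [if_neg (fun hh => h (hiff.mp hh)), if_neg h]

lemma permute2_invol (ep : Equiv.Perm (ℕ ⊕ ℕ))
    (hep : ∀ x : (ℕ ⊕ ℕ) →₀ ℕ, equivMapDomain ep (equivMapDomain ep x) = x)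
    (f : MvPowerSeries (ℕ ⊕ ℕ) R) :
    permute2 ep (permute2 ep f) = f := by
  funext e
  rw [permute2_apply, permute2_apply, hep]

lemma red2_def {B : Type*} [CommRing B] (I : Ideal B) :
    red2 I = ⇑(MvPowerSeries.map (Ideal.Quotient.mk I)) := rfl

lemma red2_coeff {B : Type*} [CommRing B] (I : Ideal B) (f : MvPowerSeries (ℕ ⊕ ℕ) B)
    (e : (ℕ ⊕ ℕ) →₀ ℕ) :
    MvPowerSeries.coeff e (red2 I f) = Ideal.Quotient.mk I (MvPowerSeries.coeff e f) :=
  MvPowerSeries.coeff_map _ _ _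

lemma red2_permute2 {B : Type*} [CommRing B] (I : Ideal B) (ep : Equiv.Perm (ℕ ⊕ ℕ))
    (f : MvPowerSeries (ℕ ⊕ ℕ) B) :
    red2 I (permute2 ep f) = permute2 ep (red2 I f) := by
  funext e
  show MvPowerSeries.coeff e (red2 I (permute2 ep f)) = permute2 ep (red2 I f) e
  rw [red2_coeff, permute2_apply]
  show _ = MvPowerSeries.coeff (equivMapDomain ep e) (red2 I f)
  rw [red2_coeff]
  rfl

lemma eq_zero_of_X_mul (v : ℕ ⊕ ℕ) (f : MvPowerSeries (ℕ ⊕ ℕ) R)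
    (h : MvPowerSeries.X v * f = 0) : f = 0 := by
  funext e
  have h0 := congrArg (fun z : MvPowerSeries (ℕ ⊕ ℕ) R => z (e + single v 1)) h
  rw [X_as_monomial, monomial_mul_apply', if_pos, one_mul, add_tsub_cancel_right,
    zero_apply'] at h0
  · rw [h0, zero_apply']
  · rw [Finsupp.single_le_iff]
    simp [Finsupp.add_apply, Finsupp.single_eq_same]

lemma X_mem {B : Type*} [CommRing B] {I : Ideal B} (ℬ : SepFamily B I) (m n j : ℕ)
    (hj : j < n) :
    (MvPowerSeries.X (Sum.inr j) : MvPowerSeries (ℕ ⊕ ℕ) B) ∈ ℬ.Bmn m n := by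
  have h := ℬ.poly_mem m n (MvPolynomial.X (Sum.inr j)) ?_
  · rwa [MvPolynomial.coe_X] at h
  · intro v hv
    rw [MvPolynomial.mem_vars] at hv
    obtain ⟨dd, hd, hvd⟩ := hv
    have hXmon : (MvPolynomial.X (Sum.inr j) : MvPolynomial (ℕ ⊕ ℕ) B)
        = MvPolynomial.monomial (single (Sum.inr j) 1) 1 := rfl
    rw [hXmon, MvPolynomial.support_monomial] at hd
    have hdd : dd = single (Sum.inr j) 1 := by
      by_cases h10 : (1 : B) = 0
      · rw [if_pos h10] at hd
        simp at hd
      · rw [if_neg h10] at hd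
        simpa using hd
    rw [hdd] at hvd
    have h6 := Finsupp.support_single_subset hvd
    rw [Finset.mem_singleton] at h6
    rw [h6]
    exact hj

end SCW
open Finsupp in
open SCW in
/-- separated Weierstrass preparation implies Weierstrass division in `ρ_n`. -/
theorem stmt2 {B : Type u} [CommRing B] (I : Ideal B) (hI : I ≠ ⊤)
    (ℬ : SepFamily B I) (hWP : SepHasWP ℬ) :
    ∀ m n d : ℕ, 1 ≤ n → ∀ f ∈ ℬ.Bmn m n, SepRegRho I n d f → ∀ g ∈ ℬ.Bmn m n,
      ∃! qr : MvPowerSeries (ℕ ⊕ ℕ) B × (Fin d → MvPowerSeries (ℕ ⊕ ℕ) B),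
        qr.1 ∈ ℬ.Bmn m n ∧ (∀ i, qr.2 i ∈ ℬ.Bmn m (n - 1)) ∧
        g = qr.1 * f + ∑ i : Fin d, qr.2 i * (MvPowerSeries.X (Sum.inr (n - 1))) ^ (i : ℕ) := by
  intro m n d hn f hf hreg g hg
  obtain ⟨N, rfl⟩ : ∃ N, n = N + 1 := ⟨n - 1, by omega⟩
  simp only [Nat.add_sub_cancel]
  -- normalized regularity of f
  have hreg' : ∀ e : (ℕ ⊕ ℕ) →₀ ℕ, (∀ j, j < N → e (Sum.inr j) = 0) →
      (∀ j, N + 1 ≤ j → e (Sum.inr j) = 0) → e (Sum.inr N) ≤ d →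
      MvPowerSeries.coeff e (red2 I f)
        = if e = Finsupp.single (Sum.inr N) d then 1 else 0 := hreg
  -- canonical preparation of f
  obtain ⟨⟨u, pf⟩, hUP, -⟩ := hWP.2 m (N + 1) d (by omega) f hf hreg
  simp only [Nat.add_sub_cancel] at hUP
  obtain ⟨hu, ⟨v, hv, huv⟩, hpmem, hfeq⟩ := hUP
  set P : MvPowerSeries (ℕ ⊕ ℕ) B :=
    MvPowerSeries.X (Sum.inr N) ^ d
      + ∑ i : Fin d, pf i * MvPowerSeries.X (Sum.inr N) ^ (i : ℕ) with hPdef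
  have hXy : (MvPowerSeries.X (Sum.inr N) : MvPowerSeries (ℕ ⊕ ℕ) B) ∈ ℬ.Bmn m (N + 1) :=
    X_mem ℬ m (N + 1) N (by omega)
  have hPmem : P ∈ ℬ.Bmn m (N + 1) := by
    rw [hPdef]
    exact add_mem (pow_mem hXy d)
      (sum_mem fun i _ => mul_mem (ℬ.mono le_rfl (by omega) (hpmem i)) (pow_mem hXy _))
  -- KEY vanishing of the reductions of the p_i at pure-ξ monomials
  have keyNat : ∀ k, ∀ hk : k < d, slice2 m 0 0 (red2 I (pf ⟨k, hk⟩)) = 0 := by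
    intro k
    induction k using Nat.strong_induction_on with
    | _ k IH =>
      intro hk
      have hΘ : slice2 m 0 (single (Sum.inr N) k) (red2 I f) = 0 := by
        funext e
        rw [slice2_apply, zero_apply']
        split
        case isTrue hok =>
          have hepure : ∀ j, e (Sum.inr j) = 0 := by
            intro j
            by_contra hj
            exact not_varOK_inr m 0 j (by omega) (hok _ (Finsupp.mem_support_iff.mpr hj))
          rw [hreg' (e + single (Sum.inr N) k) ?_ ?_ ?_]
          · rw [if_neg]
            intro hcon
            have h9 := congrArg (fun z : (ℕ ⊕ ℕ) →₀ ℕ => z (Sum.inr N)) hcon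
            simp only [Finsupp.add_apply, Finsupp.single_eq_same, hepure] at h9
            omega
          · intro j hj
            simp only [Finsupp.add_apply, hepure, Finsupp.single_apply, zero_add]
            rw [if_neg (by simp only [Sum.inr.injEq]; omega)]
          · intro j hj
            simp only [Finsupp.add_apply, hepure, Finsupp.single_apply, zero_add]
            rw [if_neg (by simp only [Sum.inr.injEq]; omega)]
          · simp only [Finsupp.add_apply, hepure, Finsupp.single_eq_same, zero_add]
            omega
        case isFalse hok => rfl
      have hredf : red2 I f = red2 I u *
          (MvPowerSeries.X (Sum.inr N) ^ d
            + ∑ i : Fin d, red2 I (pf i) * MvPowerSeries.X (Sum.inr N) ^ (i : ℕ)) := by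
        rw [hfeq, hPdef]
        simp only [red2_def, map_mul, map_add, map_pow, MvPowerSeries.map_X, map_sum]
      rw [hredf, slice2_mul m 0 N (Nat.zero_le N) k] at hΘ
      have hWsl : ∀ l (hl : l ≤ k), slice2 m 0 (single (Sum.inr N) l)
          (MvPowerSeries.X (Sum.inr N) ^ d
            + ∑ i : Fin d, red2 I (pf i) * MvPowerSeries.X (Sum.inr N) ^ (i : ℕ))
          = slice2 m 0 0 (red2 I (pf ⟨l, by omega⟩)) := by
        intro l hl
        rw [slice2_add, slice2_X_pow m 0 N (Nat.zero_le N) l d, if_neg (by omega), slice2_sum,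
          zero_add]
        have hterm : ∀ i : Fin d,
            slice2 m 0 (single (Sum.inr N) l)
              (red2 I (pf i) * MvPowerSeries.X (Sum.inr N) ^ (i : ℕ))
            = if l = (i : ℕ) then slice2 m 0 0 (red2 I (pf i)) else 0 := by
          intro i
          rw [slice2_mul m 0 N (Nat.zero_le N) l]
          rw [Finset.sum_eq_single 0 ?_ ?_]
          · rw [Nat.sub_zero, slice2_X_pow m 0 N (Nat.zero_le N) l (i : ℕ), Finsupp.single_zero,
              mul_ite, mul_one, mul_zero]
          · intro j _ hj0
            rw [slice2_of_apply_ne m 0 N j hj0 (red2 I (pf i)) ?_, zero_mul]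
            intro e he
            rw [red2_coeff, ℬ.varsBelow m N (pf i) (hpmem i) e
              ⟨Sum.inr N, Finsupp.mem_support_iff.mpr he, not_varOK_inr m N N le_rfl⟩, map_zero]
          · intro h0
            exact absurd (Finset.mem_range.mpr (by omega)) h0
        rw [show (∑ i : Fin d, slice2 m 0 (single (Sum.inr N) l)
            (red2 I (pf i) * MvPowerSeries.X (Sum.inr N) ^ (i : ℕ)))
            = ∑ i : Fin d, if l = (i : ℕ) then slice2 m 0 0 (red2 I (pf i)) else 0 from
          Finset.sum_congr rfl fun i _ => hterm i]
        rw [Finset.sum_eq_single (⟨l, by omega⟩ : Fin d) ?_ ?_]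
        · rw [if_pos rfl]
        · intro bb _ hbb
          rw [if_neg]
          intro hcon
          exact hbb (Fin.ext hcon.symm)
        · intro h0
          exact absurd (Finset.mem_univ _) h0
      have hΘ' : ∑ j ∈ Finset.range (k + 1),
          slice2 m 0 (single (Sum.inr N) j) (red2 I u)
            * slice2 m 0 0 (red2 I (pf ⟨k - j, by omega⟩)) = 0 := by
        have h8 : ∀ j ∈ Finset.range (k + 1),
            slice2 m 0 (single (Sum.inr N) j) (red2 I u)
              * slice2 m 0 (single (Sum.inr N) (k - j))
                (MvPowerSeries.X (Sum.inr N) ^ d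
                  + ∑ i : Fin d, red2 I (pf i) * MvPowerSeries.X (Sum.inr N) ^ (i : ℕ))
            = slice2 m 0 (single (Sum.inr N) j) (red2 I u)
              * slice2 m 0 0 (red2 I (pf ⟨k - j, by omega⟩)) := by
          intro j hj
          rw [hWsl (k - j) (by omega)]
        rw [← Finset.sum_congr rfl h8]
        exact hΘ
      have hmain : slice2 m 0 0 (red2 I u) * slice2 m 0 0 (red2 I (pf ⟨k, hk⟩)) = 0 := by
        rw [Finset.sum_eq_single 0 ?_ ?_] at hΘ'
        · rw [Finsupp.single_zero] at hΘ'
          exact hΘ'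
        · intro j hj hj0
          rw [IH (k - j) (by rw [Finset.mem_range] at hj; omega) (by omega), mul_zero]
        · intro h0
          exact absurd (Finset.mem_range.mpr (by omega)) h0
      have hone : slice2 m 0 0 (red2 I v) * slice2 m 0 0 (red2 I u) = 1 := by
        have h9 : red2 I u * red2 I v = 1 := by
          rw [red2_def, ← map_mul, huv, map_one]
        have h10 := slice2_mul m 0 N (Nat.zero_le N) 0 (red2 I u) (red2 I v)
        rw [Finset.sum_range_one] at h10
        simp only [Finsupp.single_zero, Nat.sub_zero] at h10
        rw [h9, slice2_one] at h10
        rw [mul_comm]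
        exact h10.symm
      calc slice2 m 0 0 (red2 I (pf ⟨k, hk⟩))
          = (slice2 m 0 0 (red2 I v) * slice2 m 0 0 (red2 I u))
              * slice2 m 0 0 (red2 I (pf ⟨k, hk⟩)) := by rw [hone, one_mul]
        _ = slice2 m 0 0 (red2 I v)
              * (slice2 m 0 0 (red2 I u) * slice2 m 0 0 (red2 I (pf ⟨k, hk⟩))) := by
              rw [mul_assoc]
        _ = 0 := by rw [hmain, mul_zero]
  have key : ∀ i : Fin d, ∀ β : (ℕ ⊕ ℕ) →₀ ℕ, (∀ j, β (Sum.inr j) = 0) →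
      MvPowerSeries.coeff β (red2 I (pf i)) = 0 := by
    intro i β hβ
    by_cases hok : ∀ w ∈ β.support, varOK m 0 w
    · have h0 := congrFun (keyNat i.1 i.2) β
      rw [slice2_apply, if_pos hok, add_zero, zero_apply'] at h0
      exact h0
    · push_neg at hok
      obtain ⟨w, hw, hbad⟩ := hok
      rcases w with i0 | j0
      · rw [red2_coeff, ℬ.varsBelow m N (pf i) (hpmem i) β ⟨Sum.inl i0, hw, hbad⟩, map_zero]
      · exact absurd (hβ j0) (Finsupp.mem_support_iff.mp hw)
  -- coefficients of the reduction of P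
  have coeff_redP : ∀ ε : (ℕ ⊕ ℕ) →₀ ℕ, (∀ j, j ≠ N → ε (Sum.inr j) = 0) →
      MvPowerSeries.coeff ε (red2 I P)
        = if ε = single (Sum.inr N) d then 1 else 0 := by
    intro ε hε
    have hredP : red2 I P = MvPowerSeries.X (Sum.inr N) ^ d
        + ∑ i : Fin d, red2 I (pf i) * MvPowerSeries.X (Sum.inr N) ^ (i : ℕ) := by
      rw [hPdef]
      simp only [red2_def, map_add, map_pow, MvPowerSeries.map_X, map_sum, map_mul]
    rw [hredP, map_add, MvPowerSeries.coeff_X_pow, map_sum]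
    have hz : ∀ i : Fin d, MvPowerSeries.coeff ε
        (red2 I (pf i) * MvPowerSeries.X (Sum.inr N) ^ (i : ℕ)) = 0 := by
      intro i
      rw [MvPowerSeries.X_pow_eq, MvPowerSeries.coeff_mul_monomial]
      split
      case isTrue hle =>
        rw [mul_one]
        by_cases hNz : ((ε - single (Sum.inr N) i.val : (ℕ ⊕ ℕ) →₀ ℕ)) (Sum.inr N) = 0
        · have hpure : ∀ j, ((ε - single (Sum.inr N) i.val : (ℕ ⊕ ℕ) →₀ ℕ)) (Sum.inr j) = 0 := by
            intro j
            rcases eq_or_ne j N with rfl | hj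
            · exact hNz
            · rw [Finsupp.tsub_apply, hε j hj]
              simp
          exact key i _ hpure
        · rw [red2_coeff, ℬ.varsBelow m N (pf i) (hpmem i) _
            ⟨Sum.inr N, Finsupp.mem_support_iff.mpr hNz, not_varOK_inr m N N le_rfl⟩, map_zero]
      case isFalse h => rfl
    rw [Finset.sum_eq_zero fun i _ => hz i, add_zero]
  have hPreg : SepRegRho I (N + 1) d P := by
    intro e h1 h2 h3
    exact coeff_redP e fun j hj => by
      rcases Nat.lt_or_ge j N with h | h
      · exact h1 j h
      · exact h2 j (by omega)
  -- the swap permutation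
  set σp : Equiv.Perm (ℕ ⊕ ℕ) := Equiv.sumCongr (Equiv.refl ℕ) (Equiv.swap N (N + 1))
    with hσdef
  have hswfix : ∀ j, N + 2 ≤ j → Equiv.swap N (N + 1) j = j := fun j hj =>
    Equiv.swap_apply_of_ne_of_ne (by omega) (by omega)
  have hσa : σp (Sum.inr N) = Sum.inr (N + 1) := by
    rw [hσdef]
    simp only [Equiv.sumCongr_apply, Sum.map_inr]
    rw [Equiv.swap_apply_left]
  have hσb : σp (Sum.inr (N + 1)) = Sum.inr N := by
    rw [hσdef]
    simp only [Equiv.sumCongr_apply, Sum.map_inr]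
    rw [Equiv.swap_apply_right]
  have hσother : ∀ j, j ≠ N → j ≠ N + 1 → σp (Sum.inr j) = Sum.inr j := by
    intro j hj1 hj2
    rw [hσdef]
    simp only [Equiv.sumCongr_apply, Sum.map_inr]
    rw [Equiv.swap_apply_of_ne_of_ne hj1 hj2]
  have hσsymm : σp.symm = σp := by
    rw [hσdef, Equiv.sumCongr_symm, Equiv.symm_swap]
    simp
  have hσy : σp.symm (Sum.inr (N + 1)) = Sum.inr N := by rw [hσsymm]; exact hσb
  have hσt : σp.symm (Sum.inr N) = Sum.inr (N + 1) := by rw [hσsymm]; exact hσa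
  have hσapp : ∀ (x : (ℕ ⊕ ℕ) →₀ ℕ) (w : ℕ ⊕ ℕ), equivMapDomain σp x w = x (σp w) :=
    fun x w => by rw [equivMapDomain_apply, hσsymm]
  have hσσv : ∀ w : ℕ ⊕ ℕ, σp (σp w) = w := by
    intro w
    rcases w with i | j
    · rw [hσdef]; rfl
    · rw [hσdef]
      simp [Equiv.sumCongr_apply, Equiv.swap_apply_self]
  have hσσ' : ∀ x : (ℕ ⊕ ℕ) →₀ ℕ, equivMapDomain σp (equivMapDomain σp x) = x := by
    intro x
    ext w
    rw [hσapp, hσapp, hσσv]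
  have hperm_fix : ∀ h : MvPowerSeries (ℕ ⊕ ℕ) B,
      (∀ e : (ℕ ⊕ ℕ) →₀ ℕ, e (Sum.inr N) ≠ 0 ∨ e (Sum.inr (N + 1)) ≠ 0 →
        MvPowerSeries.coeff e h = 0) → permute2 σp h = h := by
    intro h hcond
    funext e
    rw [permute2_apply]
    by_cases h1 : e (Sum.inr N) = 0 ∧ e (Sum.inr (N + 1)) = 0
    · congr 1
      ext w
      rw [hσapp]
      rcases w with i | j
      · rw [hσdef]; rfl
      · rcases eq_or_ne j N with rfl | hjN
        · rw [hσa, h1.2, h1.1]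
        · rcases eq_or_ne j (N + 1) with rfl | hjN1
          · rw [hσb, h1.1, h1.2]
          · rw [hσother j hjN hjN1]
    · have hL : MvPowerSeries.coeff (equivMapDomain σp e) h = 0 := by
        apply hcond
        rw [hσapp, hσapp, hσa, hσb]
        rcases not_and_or.mp h1 with h | h
        · right; exact h
        · left; exact h
      have hR : MvPowerSeries.coeff e h = 0 := hcond e (not_and_or.mp h1)
      rw [coeffFn] at hL hR
      rw [hL, hR]
  -- the auxiliary series F
  set Fhat : MvPowerSeries (ℕ ⊕ ℕ) B := P + MvPowerSeries.X (Sum.inr (N + 1)) * g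
    with hFhatdef
  have hFhatmem : Fhat ∈ ℬ.Bmn m (N + 2) := by
    rw [hFhatdef]
    exact add_mem (ℬ.mono le_rfl (by omega) hPmem)
      (mul_mem (X_mem ℬ m (N + 2) (N + 1) (by omega)) (ℬ.mono le_rfl (by omega) hg))
  set F : MvPowerSeries (ℕ ⊕ ℕ) B := permute2 σp Fhat with hFdef
  have hFmem : F ∈ ℬ.Bmn m (N + 2) :=
    ℬ.permRho m (N + 2) (Equiv.swap N (N + 1)) hswfix Fhat hFhatmem
  have hFreg : SepRegRho I (N + 2) d F := by
    intro e h1 h2 h3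
    have h1' : ∀ j, j < N + 1 → e (Sum.inr j) = 0 := h1
    have hco : MvPowerSeries.coeff e (red2 I F)
        = MvPowerSeries.coeff (equivMapDomain σp e) (red2 I Fhat) := by
      rw [hFdef, red2_permute2]
      rfl
    rw [hco]
    have hredFhat : red2 I Fhat
        = red2 I P + MvPowerSeries.X (Sum.inr (N + 1)) * red2 I g := by
      rw [hFhatdef]
      simp only [red2_def, map_add, map_mul, MvPowerSeries.map_X]
    rw [hredFhat, map_add]
    have hXg : MvPowerSeries.coeff (equivMapDomain σp e)
        (MvPowerSeries.X (Sum.inr (N + 1)) * red2 I g) = 0 := by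
      rw [coeffFn, X_as_monomial, monomial_mul_apply', if_neg]
      have h9 : e (σp (Sum.inr (N + 1))) = 0 :=
        (congrArg (fun w => e w) hσb).trans (h1' N (by omega))
      rw [Finsupp.single_le_iff, hσapp, h9]
      omega
    rw [hXg, add_zero, coeff_redP (equivMapDomain σp e) ?_]
    · refine if_congr ?_ rfl rfl
      constructor
      · intro h
        have h9 := congrArg (equivMapDomain σp) h
        rw [hσσ' e, equivMapDomain_single] at h9
        exact h9.trans (congrArg (fun w => Finsupp.single w d) hσa)
      · intro h
        rw [h, equivMapDomain_single]
        exact congrArg (fun w => Finsupp.single w d) hσb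
    · intro j hj
      rw [hσapp]
      rcases eq_or_ne j (N + 1) with rfl | hj1
      · rw [hσb]
        exact h1' N (by omega)
      · rw [hσother j hj hj1]
        rcases Nat.lt_or_ge j (N + 1) with h | h
        · exact h1' j h
        · exact h2 j (by omega)
  -- preparation of F
  obtain ⟨⟨U, Af⟩, hUA, -⟩ := hWP.2 m (N + 2) d (by omega) F hFmem hFreg
  obtain ⟨hU, ⟨V, hV, hUV⟩, hAmem0, hFeq0⟩ := hUA
  have hAmem : ∀ i : Fin d, Af i ∈ ℬ.Bmn m (N + 1) := hAmem0
  have hFeq : F = U * (MvPowerSeries.X (Sum.inr (N + 1)) ^ d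
      + ∑ i : Fin d, Af i * MvPowerSeries.X (Sum.inr (N + 1)) ^ (i : ℕ)) := hFeq0
  have hFhat_eq : Fhat = permute2 σp U *
      (MvPowerSeries.X (Sum.inr N) ^ d
        + ∑ i : Fin d, permute2 σp (Af i) * MvPowerSeries.X (Sum.inr N) ^ (i : ℕ)) := by
    have h1 := congrArg (permute2 σp) hFeq
    rw [hFdef, permute2_invol σp hσσ' Fhat] at h1
    rw [permute2_mul, permute2_add, permute2_pow, permute2_X, hσy, permute2_sum] at h1
    rw [show (∑ i : Fin d, permute2 σp (Af i * MvPowerSeries.X (Sum.inr (N + 1)) ^ (i : ℕ)))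
        = ∑ i : Fin d, permute2 σp (Af i) * MvPowerSeries.X (Sum.inr N) ^ (i : ℕ) from
      Finset.sum_congr rfl fun i _ => by
        rw [permute2_mul, permute2_pow, permute2_X, hσy]] at h1
    exact h1
  -- slices of Fhat
  have hvanP : ∀ e : (ℕ ⊕ ℕ) →₀ ℕ, (∃ w ∈ e.support, ¬ varOK m (N + 1) w) →
      MvPowerSeries.coeff e P = 0 := fun e he => ℬ.varsBelow _ _ P hPmem e he
  have hvang : ∀ e : (ℕ ⊕ ℕ) →₀ ℕ, (∃ w ∈ e.support, ¬ varOK m (N + 1) w) →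
      MvPowerSeries.coeff e g = 0 := fun e he => ℬ.varsBelow _ _ g hg e he
  have hL0 : slice2 m (N + 1) 0 Fhat = P := by
    rw [hFhatdef, slice2_add, slice2_eq_self m (N + 1) P hvanP,
      slice2_X_mul_zero m (N + 1) (N + 1) le_rfl g, add_zero]
  have hL1 : slice2 m (N + 1) (single (Sum.inr (N + 1)) 1) Fhat = g := by
    rw [hFhatdef, slice2_add, slice2_of_apply_ne m (N + 1) (N + 1) 1 one_ne_zero P
      (fun e he => hvanP e ⟨Sum.inr (N + 1), Finsupp.mem_support_iff.mpr he,
        not_varOK_inr m (N + 1) (N + 1) le_rfl⟩)]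
    have hXg1 : slice2 m (N + 1) (single (Sum.inr (N + 1)) 1)
        (MvPowerSeries.X (Sum.inr (N + 1)) * g) = slice2 m (N + 1) 0 g := by
      have h5 := slice2_X_mul_succ m (N + 1) (N + 1) 0 g
      rw [Finsupp.single_zero] at h5
      exact h5
    rw [hXg1, slice2_eq_self m (N + 1) g hvang, zero_add]
  have hσU : permute2 σp U ∈ ℬ.Bmn m (N + 2) :=
    ℬ.permRho m (N + 2) (Equiv.swap N (N + 1)) hswfix U hU
  have hσV : permute2 σp V ∈ ℬ.Bmn m (N + 2) :=
    ℬ.permRho m (N + 2) (Equiv.swap N (N + 1)) hswfix V hV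
  have hσAf : ∀ i : Fin d, permute2 σp (Af i) ∈ ℬ.Bmn m (N + 2) := fun i =>
    ℬ.permRho m (N + 2) (Equiv.swap N (N + 1)) hswfix (Af i)
      (ℬ.mono le_rfl (by omega) (hAmem i))
  have hAfnoy : ∀ i : Fin d, ∀ e : (ℕ ⊕ ℕ) →₀ ℕ, e (Sum.inr N) ≠ 0 →
      MvPowerSeries.coeff e (permute2 σp (Af i)) = 0 := by
    intro i e he
    rw [coeff_permute2]
    apply ℬ.varsBelow m (N + 1) (Af i) (hAmem i)
    refine ⟨Sum.inr (N + 1), ?_, not_varOK_inr m (N + 1) (N + 1) le_rfl⟩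
    rw [Finsupp.mem_support_iff, hσapp]
    rw [show σp (Sum.inr (N + 1)) = Sum.inr N from hσb]
    exact he
  set a : Fin d → MvPowerSeries (ℕ ⊕ ℕ) B :=
    fun i => slice2 m N 0 (permute2 σp (Af i)) with hadef
  set b : Fin d → MvPowerSeries (ℕ ⊕ ℕ) B :=
    fun i => slice2 m N (single (Sum.inr (N + 1)) 1) (permute2 σp (Af i)) with hbdef
  have hamem : ∀ i, a i ∈ ℬ.Bmn m N := fun i =>
    ℬ.slice_mem le_rfl (by omega) 0 (by simp) _ (hσAf i)
  have hbmem : ∀ i, b i ∈ ℬ.Bmn m N := fun i =>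
    ℬ.slice_mem le_rfl (by omega) (single (Sum.inr (N + 1)) 1)
      (by
        intro w hw
        have h6 := Finsupp.support_single_subset hw
        rw [Finset.mem_singleton] at h6
        rw [h6]
        exact not_varOK_inr m N (N + 1) (by omega)) _ (hσAf i)
  have halev : ∀ i : Fin d, slice2 m (N + 1) 0 (permute2 σp (Af i)) = a i := fun i =>
    (slice2_level m N 0 _ (hAfnoy i)).symm
  have hblev : ∀ i : Fin d,
      slice2 m (N + 1) (single (Sum.inr (N + 1)) 1) (permute2 σp (Af i)) = b i := fun i =>
    (slice2_level m N (single (Sum.inr (N + 1)) 1) _ (hAfnoy i)).symm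
  set U0 : MvPowerSeries (ℕ ⊕ ℕ) B := slice2 m (N + 1) 0 (permute2 σp U) with hU0def
  set U1 : MvPowerSeries (ℕ ⊕ ℕ) B :=
    slice2 m (N + 1) (single (Sum.inr (N + 1)) 1) (permute2 σp U) with hU1def
  have hU0mem : U0 ∈ ℬ.Bmn m (N + 1) := ℬ.slice_mem le_rfl (by omega) 0 (by simp) _ hσU
  have hU1mem : U1 ∈ ℬ.Bmn m (N + 1) :=
    ℬ.slice_mem le_rfl (by omega) (single (Sum.inr (N + 1)) 1)
      (by
        intro w hw
        have h6 := Finsupp.support_single_subset hw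
        rw [Finset.mem_singleton] at h6
        rw [h6]
        exact not_varOK_inr m (N + 1) (N + 1) le_rfl) _ hσU
  have hsliceXy : ∀ k0 : ℕ, slice2 m (N + 1) 0
      ((MvPowerSeries.X (Sum.inr N) : MvPowerSeries (ℕ ⊕ ℕ) B) ^ k0)
      = MvPowerSeries.X (Sum.inr N) ^ k0 := by
    intro k0
    apply slice2_eq_self
    intro e he
    obtain ⟨w, hw, hbad⟩ := he
    rw [MvPowerSeries.coeff_X_pow, if_neg]
    intro hcon
    rw [hcon] at hw
    have h6 := Finsupp.support_single_subset hw
    rw [Finset.mem_singleton] at h6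
    rw [h6] at hbad
    exact hbad (show N < N + 1 by omega)
  have hsliceXy1 : ∀ k0 : ℕ, slice2 m (N + 1) (single (Sum.inr (N + 1)) 1)
      ((MvPowerSeries.X (Sum.inr N) : MvPowerSeries (ℕ ⊕ ℕ) B) ^ k0) = 0 := by
    intro k0
    apply slice2_of_apply_ne m (N + 1) (N + 1) 1 one_ne_zero
    intro e he
    rw [MvPowerSeries.coeff_X_pow, if_neg]
    intro hcon
    rw [hcon] at he
    simp [Finsupp.single_apply] at he
  set W2 : MvPowerSeries (ℕ ⊕ ℕ) B := MvPowerSeries.X (Sum.inr N) ^ d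
      + ∑ i : Fin d, permute2 σp (Af i) * MvPowerSeries.X (Sum.inr N) ^ (i : ℕ) with hW2def
  have hsl0W : slice2 m (N + 1) 0 W2
      = MvPowerSeries.X (Sum.inr N) ^ d
        + ∑ i : Fin d, a i * MvPowerSeries.X (Sum.inr N) ^ (i : ℕ) := by
    rw [hW2def, slice2_add, slice2_sum, hsliceXy d]
    congr 1
    refine Finset.sum_congr rfl fun i _ => ?_
    have h4 := slice2_mul m (N + 1) (N + 1) le_rfl 0 (permute2 σp (Af i))
      (MvPowerSeries.X (Sum.inr N) ^ (i : ℕ))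
    rw [Finset.sum_range_one] at h4
    simp only [Finsupp.single_zero, Nat.sub_zero] at h4
    rw [h4, hsliceXy (i : ℕ), halev i]
  have hsl1W : slice2 m (N + 1) (single (Sum.inr (N + 1)) 1) W2
      = ∑ i : Fin d, b i * MvPowerSeries.X (Sum.inr N) ^ (i : ℕ) := by
    rw [hW2def, slice2_add, slice2_sum, hsliceXy1 d, zero_add]
    refine Finset.sum_congr rfl fun i _ => ?_
    have h4 := slice2_mul m (N + 1) (N + 1) le_rfl 1 (permute2 σp (Af i))
      (MvPowerSeries.X (Sum.inr N) ^ (i : ℕ))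
    rw [Finset.sum_range_succ, Finset.sum_range_one] at h4
    simp only [Finsupp.single_zero, Nat.sub_zero, Nat.sub_self] at h4
    rw [h4, hsliceXy1 (i : ℕ), mul_zero, zero_add, hsliceXy (i : ℕ), hblev i]
  have hsl0 : P = U0 * (MvPowerSeries.X (Sum.inr N) ^ d
      + ∑ i : Fin d, a i * MvPowerSeries.X (Sum.inr N) ^ (i : ℕ)) := by
    have h1 := congrArg (slice2 m (N + 1) 0) hFhat_eq
    rw [hL0] at h1
    have h2 := slice2_mul m (N + 1) (N + 1) le_rfl 0 (permute2 σp U) W2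
    rw [Finset.sum_range_one] at h2
    simp only [Finsupp.single_zero, Nat.sub_zero] at h2
    rw [h2, hsl0W] at h1
    exact h1
  have hV0 : U0 * slice2 m (N + 1) 0 (permute2 σp V) = 1 := by
    have h5 : permute2 σp U * permute2 σp V = 1 := by
      rw [← permute2_mul, hUV, permute2_one]
    have h6 := slice2_mul m (N + 1) (N + 1) le_rfl 0 (permute2 σp U) (permute2 σp V)
    rw [Finset.sum_range_one] at h6
    simp only [Finsupp.single_zero, Nat.sub_zero] at h6
    rw [h5, slice2_one] at h6
    exact h6.symm
  have hV0mem : slice2 m (N + 1) 0 (permute2 σp V) ∈ ℬ.Bmn m (N + 1) :=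
    ℬ.slice_mem le_rfl (by omega) 0 (by simp) _ hσV
  obtain ⟨cP, hcPsat, hcPuniq⟩ := hWP.2 m (N + 1) d (by omega) P hPmem hPreg
  have epair1 : ((U0, a) : MvPowerSeries (ℕ ⊕ ℕ) B × (Fin d → MvPowerSeries (ℕ ⊕ ℕ) B)) = cP :=
    hcPuniq (U0, a) ⟨hU0mem, ⟨_, hV0mem, hV0⟩, hamem, hsl0⟩
  have epair2 : ((1, pf) : MvPowerSeries (ℕ ⊕ ℕ) B × (Fin d → MvPowerSeries (ℕ ⊕ ℕ) B)) = cP :=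
    hcPuniq (1, pf) ⟨one_mem _, ⟨1, one_mem _, one_mul 1⟩, hpmem, (one_mul P).symm⟩
  have epair := epair1.trans epair2.symm
  have hU0one : U0 = 1 := congrArg Prod.fst epair
  have hapf : a = pf := congrArg Prod.snd epair
  have hsl1 : g = U0 * (∑ i : Fin d, b i * MvPowerSeries.X (Sum.inr N) ^ (i : ℕ))
      + U1 * (MvPowerSeries.X (Sum.inr N) ^ d
        + ∑ i : Fin d, a i * MvPowerSeries.X (Sum.inr N) ^ (i : ℕ)) := by
    have h1 := congrArg (slice2 m (N + 1) (single (Sum.inr (N + 1)) 1)) hFhat_eq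
    rw [hL1] at h1
    have h2 := slice2_mul m (N + 1) (N + 1) le_rfl 1 (permute2 σp U) W2
    rw [Finset.sum_range_succ, Finset.sum_range_one] at h2
    simp only [Finsupp.single_zero, Nat.sub_zero, Nat.sub_self] at h2
    rw [h2, hsl0W, hsl1W] at h1
    exact h1
  rw [hU0one, one_mul] at hsl1
  have haP : (MvPowerSeries.X (Sum.inr N) ^ d
      + ∑ i : Fin d, a i * MvPowerSeries.X (Sum.inr N) ^ (i : ℕ)) = P := by
    rw [hapf, hPdef]
  rw [haP] at hsl1
  set q : MvPowerSeries (ℕ ⊕ ℕ) B := U1 * v with hqdef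
  have hqmem : q ∈ ℬ.Bmn m (N + 1) := mul_mem hU1mem hv
  have hdiveq : g = q * f + ∑ i : Fin d, b i * MvPowerSeries.X (Sum.inr N) ^ (i : ℕ) := by
    have h7 : q * f = U1 * P := by
      rw [hqdef, hfeq]
      calc U1 * v * (u * P) = U1 * P * (u * v) := by ring
        _ = U1 * P := by rw [huv, mul_one]
    rw [h7, hsl1]
    exact (add_comm _ _)
  -- uniqueness of division
  have uniq : ∀ (q₁ : MvPowerSeries (ℕ ⊕ ℕ) B) (r₁ : Fin d → MvPowerSeries (ℕ ⊕ ℕ) B)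
      (q₂ : MvPowerSeries (ℕ ⊕ ℕ) B) (r₂ : Fin d → MvPowerSeries (ℕ ⊕ ℕ) B),
      q₁ ∈ ℬ.Bmn m (N + 1) → (∀ i, r₁ i ∈ ℬ.Bmn m N) →
      q₂ ∈ ℬ.Bmn m (N + 1) → (∀ i, r₂ i ∈ ℬ.Bmn m N) →
      g = q₁ * f + ∑ i : Fin d, r₁ i * MvPowerSeries.X (Sum.inr N) ^ (i : ℕ) →
      g = q₂ * f + ∑ i : Fin d, r₂ i * MvPowerSeries.X (Sum.inr N) ^ (i : ℕ) →
      q₁ = q₂ ∧ ∀ i, r₁ i = r₂ i := by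
    intro q₁ r₁ q₂ r₂ hq₁ hr₁ hq₂ hr₂ he₁ he₂
    have hδ : (q₁ - q₂) * f
        + ∑ i : Fin d, (r₁ i - r₂ i) * MvPowerSeries.X (Sum.inr N) ^ (i : ℕ) = 0 := by
      have h1 : ∑ i : Fin d, (r₁ i - r₂ i) * MvPowerSeries.X (Sum.inr N) ^ (i : ℕ)
          = (∑ i : Fin d, r₁ i * MvPowerSeries.X (Sum.inr N) ^ (i : ℕ))
            - ∑ i : Fin d, r₂ i * MvPowerSeries.X (Sum.inr N) ^ (i : ℕ) := by
        rw [← Finset.sum_sub_distrib]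
        exact Finset.sum_congr rfl fun i _ => by ring
      rw [h1]
      linear_combination he₂ - he₁
    have hh0P : (q₁ - q₂) * u * P
        = - ∑ i : Fin d, (r₁ i - r₂ i) * MvPowerSeries.X (Sum.inr N) ^ (i : ℕ) := by
      have h2 : (q₁ - q₂) * f = (q₁ - q₂) * u * P := by rw [hfeq]; ring
      linear_combination hδ - h2
    have hh0mem : (q₁ - q₂) * u ∈ ℬ.Bmn m (N + 1) := mul_mem (sub_mem hq₁ hq₂) hu
    have hσh0mem : permute2 σp ((q₁ - q₂) * u) ∈ ℬ.Bmn m (N + 2) :=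
      ℬ.permRho m (N + 2) (Equiv.swap N (N + 1)) hswfix _ (ℬ.mono le_rfl (by omega) hh0mem)
    set Ee : MvPowerSeries (ℕ ⊕ ℕ) B :=
      1 - MvPowerSeries.X (Sum.inr N) * permute2 σp ((q₁ - q₂) * u) with hEedef
    have hEemem : Ee ∈ ℬ.Bmn m (N + 2) := by
      rw [hEedef]
      exact sub_mem (one_mem _) (mul_mem (X_mem ℬ m (N + 2) N (by omega)) hσh0mem)
    have hfixp : ∀ i : Fin d, permute2 σp (pf i) = pf i := fun i =>
      hperm_fix (pf i) (fun e he => by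
        rcases he with h | h
        · exact ℬ.varsBelow m N (pf i) (hpmem i) e
            ⟨Sum.inr N, Finsupp.mem_support_iff.mpr h, not_varOK_inr m N N le_rfl⟩
        · exact ℬ.varsBelow m N (pf i) (hpmem i) e
            ⟨Sum.inr (N + 1), Finsupp.mem_support_iff.mpr h, not_varOK_inr m N (N + 1) (by omega)⟩)
    have hfixr : ∀ i : Fin d, permute2 σp (r₁ i - r₂ i) = r₁ i - r₂ i := fun i =>
      hperm_fix (r₁ i - r₂ i) (fun e he => by
        have hmem := sub_mem (hr₁ i) (hr₂ i)
        rcases he with h | h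
        · exact ℬ.varsBelow m N _ hmem e
            ⟨Sum.inr N, Finsupp.mem_support_iff.mpr h, not_varOK_inr m N N le_rfl⟩
        · exact ℬ.varsBelow m N _ hmem e
            ⟨Sum.inr (N + 1), Finsupp.mem_support_iff.mpr h, not_varOK_inr m N (N + 1) (by omega)⟩)
    have hσP : permute2 σp P = MvPowerSeries.X (Sum.inr (N + 1)) ^ d
        + ∑ i : Fin d, pf i * MvPowerSeries.X (Sum.inr (N + 1)) ^ (i : ℕ) := by
      rw [hPdef, permute2_add, permute2_pow, permute2_X, hσt, permute2_sum]
      congr 1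
      exact Finset.sum_congr rfl fun i _ => by
        rw [permute2_mul, permute2_pow, permute2_X, hσt, hfixp i]
    set Nser : MvPowerSeries (ℕ ⊕ ℕ) B := MvPowerSeries.X (Sum.inr (N + 1)) ^ d
      + ∑ i : Fin d, (pf i + MvPowerSeries.X (Sum.inr N) * (r₁ i - r₂ i))
          * MvPowerSeries.X (Sum.inr (N + 1)) ^ (i : ℕ) with hNdef
    have hNmem : Nser ∈ ℬ.Bmn m (N + 2) := by
      rw [hNdef]
      refine add_mem (pow_mem (X_mem ℬ m (N + 2) (N + 1) (by omega)) d)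
        (sum_mem fun i _ => mul_mem
          (add_mem (ℬ.mono le_rfl (by omega) (hpmem i))
            (mul_mem (X_mem ℬ m (N + 2) N (by omega))
              (ℬ.mono le_rfl (by omega) (sub_mem (hr₁ i) (hr₂ i)))))
          (pow_mem (X_mem ℬ m (N + 2) (N + 1) (by omega)) _))
    have hNfact : Nser = Ee * (MvPowerSeries.X (Sum.inr (N + 1)) ^ d
        + ∑ i : Fin d, pf i * MvPowerSeries.X (Sum.inr (N + 1)) ^ (i : ℕ)) := by
      rw [← hσP, hEedef, sub_mul, one_mul, mul_assoc, ← permute2_mul, hh0P, permute2_neg,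
        mul_neg, sub_neg_eq_add]
      have h2 : permute2 σp (∑ i : Fin d, (r₁ i - r₂ i) * MvPowerSeries.X (Sum.inr N) ^ (i : ℕ))
          = ∑ i : Fin d, (r₁ i - r₂ i) * MvPowerSeries.X (Sum.inr (N + 1)) ^ (i : ℕ) := by
        rw [permute2_sum]
        exact Finset.sum_congr rfl fun i _ => by
          rw [permute2_mul, permute2_pow, permute2_X, hσt, hfixr i]
      rw [h2, hNdef, hσP, Finset.mul_sum, add_assoc, ← Finset.sum_add_distrib]
      congr 1
      exact Finset.sum_congr rfl fun i _ => by ring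
    have hNreg : SepRegRho I (N + 2) d Nser := by
      intro e h1 h2 h3
      have h1' : ∀ j, j < N + 1 → e (Sum.inr j) = 0 := h1
      have hr : red2 I Nser = MvPowerSeries.X (Sum.inr (N + 1)) ^ d
          + ∑ i : Fin d, (red2 I (pf i)
              + MvPowerSeries.X (Sum.inr N) * red2 I (r₁ i - r₂ i))
            * MvPowerSeries.X (Sum.inr (N + 1)) ^ (i : ℕ) := by
        rw [hNdef]
        simp only [red2_def, map_add, map_pow, map_sum, map_mul, MvPowerSeries.map_X]
      rw [hr, map_add, MvPowerSeries.coeff_X_pow, map_sum]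
      have hz : ∀ i : Fin d, MvPowerSeries.coeff e
          ((red2 I (pf i) + MvPowerSeries.X (Sum.inr N) * red2 I (r₁ i - r₂ i))
            * MvPowerSeries.X (Sum.inr (N + 1)) ^ (i : ℕ)) = 0 := by
        intro i
        rw [MvPowerSeries.X_pow_eq, MvPowerSeries.coeff_mul_monomial]
        split
        case isTrue hle =>
          rw [mul_one, map_add]
          have hA : MvPowerSeries.coeff (e - single (Sum.inr (N + 1)) (i : ℕ))
              (red2 I (pf i)) = 0 := by
            by_cases hγt : ((e - single (Sum.inr (N + 1)) i.val : (ℕ ⊕ ℕ) →₀ ℕ)) (Sum.inr (N + 1)) = 0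
            · have hpure : ∀ j, ((e - single (Sum.inr (N + 1)) i.val : (ℕ ⊕ ℕ) →₀ ℕ)) (Sum.inr j) = 0 := by
                intro j
                rcases Nat.lt_or_ge j (N + 1) with h | h
                · rw [Finsupp.tsub_apply, h1' j h]
                  simp
                · rcases eq_or_ne j (N + 1) with rfl | hj
                  · exact hγt
                  · rw [Finsupp.tsub_apply, h2 j (by omega)]
                    simp
              exact key i _ hpure
            · rw [red2_coeff, ℬ.varsBelow m N (pf i) (hpmem i) _
                ⟨Sum.inr (N + 1), Finsupp.mem_support_iff.mpr hγt,
                  not_varOK_inr m N (N + 1) (by omega)⟩, map_zero]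
          have hB : MvPowerSeries.coeff (e - single (Sum.inr (N + 1)) (i : ℕ))
              (MvPowerSeries.X (Sum.inr N) * red2 I (r₁ i - r₂ i)) = 0 := by
            rw [coeffFn, X_as_monomial, monomial_mul_apply', if_neg]
            rw [Finsupp.single_le_iff, Finsupp.tsub_apply, h1' N (by omega)]
            simp
          rw [hA, hB, add_zero]
        case isFalse h => rfl
      rw [Finset.sum_eq_zero fun i _ => hz i, add_zero]
      rfl
    have hEreg : SepRegRho I (N + 2) 0 Ee := by
      intro e h1 h2 h3
      have h1' : ∀ j, j < N + 1 → e (Sum.inr j) = 0 := h1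
      have hr : red2 I Ee = 1 - MvPowerSeries.X (Sum.inr N)
          * red2 I (permute2 σp ((q₁ - q₂) * u)) := by
        rw [hEedef]
        simp only [red2_def, map_sub, map_one, map_mul, MvPowerSeries.map_X]
      rw [hr, map_sub, MvPowerSeries.coeff_one]
      have hz : MvPowerSeries.coeff e
          (MvPowerSeries.X (Sum.inr N) * red2 I (permute2 σp ((q₁ - q₂) * u))) = 0 := by
        rw [coeffFn, X_as_monomial, monomial_mul_apply', if_neg]
        rw [Finsupp.single_le_iff, h1' N (by omega)]
        omega
      rw [hz, sub_zero, Finsupp.single_zero]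
    obtain ⟨⟨u0, r0⟩, hu0sat, -⟩ := hWP.2 m (N + 2) 0 (by omega) Ee hEemem hEreg
    obtain ⟨hu0mem, ⟨w0, hw0mem, hu0w0⟩, -, hEeq⟩ := hu0sat
    have hEu0 : Ee = u0 := by
      rw [hEeq]
      simp
    have hEunit : ∃ w ∈ ℬ.Bmn m (N + 2), Ee * w = 1 :=
      ⟨w0, hw0mem, by rw [hEu0]; exact hu0w0⟩
    obtain ⟨cN2, hcN2sat, hcN2uniq⟩ := hWP.2 m (N + 2) d (by omega) Nser hNmem hNreg
    have ep1 : ((1, fun i => pf i + MvPowerSeries.X (Sum.inr N) * (r₁ i - r₂ i)) :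
        MvPowerSeries (ℕ ⊕ ℕ) B × (Fin d → MvPowerSeries (ℕ ⊕ ℕ) B)) = cN2 :=
      hcN2uniq _ ⟨one_mem _, ⟨1, one_mem _, one_mul 1⟩,
        (fun i => add_mem (ℬ.mono le_rfl (by omega) (hpmem i))
          (mul_mem hXy (ℬ.mono le_rfl (by omega) (sub_mem (hr₁ i) (hr₂ i))))),
        (by rw [one_mul]; exact hNdef)⟩
    have ep2 : ((Ee, pf) :
        MvPowerSeries (ℕ ⊕ ℕ) B × (Fin d → MvPowerSeries (ℕ ⊕ ℕ) B)) = cN2 :=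
      hcN2uniq _ ⟨hEemem, hEunit, (fun i => ℬ.mono le_rfl (by omega) (hpmem i)), hNfact⟩
    have epq := ep1.trans ep2.symm
    have hE1 : (1 : MvPowerSeries (ℕ ⊕ ℕ) B) = Ee := congrArg Prod.fst epq
    have hcfun : (fun i => pf i + MvPowerSeries.X (Sum.inr N) * (r₁ i - r₂ i)) = pf :=
      congrArg Prod.snd epq
    have hσh00 : MvPowerSeries.X (Sum.inr N) * permute2 σp ((q₁ - q₂) * u) = 0 := by
      have h9 : (1 : MvPowerSeries (ℕ ⊕ ℕ) B)
          - MvPowerSeries.X (Sum.inr N) * permute2 σp ((q₁ - q₂) * u) = 1 := by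
        rw [← hEedef]
        exact hE1.symm
      exact sub_eq_self.mp h9
    have hh00 : (q₁ - q₂) * u = 0 := by
      have h8 : permute2 σp ((q₁ - q₂) * u) = 0 := eq_zero_of_X_mul _ _ hσh00
      have h9 := congrArg (permute2 σp) h8
      rw [permute2_invol σp hσσ', permute2_zero] at h9
      exact h9
    have hδq0 : q₁ - q₂ = 0 := by
      have h9 : (q₁ - q₂) * (u * v) = 0 := by
        rw [← mul_assoc, hh00, zero_mul]
      rw [huv, mul_one] at h9
      exact h9
    refine ⟨sub_eq_zero.mp hδq0, fun i => ?_⟩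
    have h10 := congrFun hcfun i
    have h11 : MvPowerSeries.X (Sum.inr N) * (r₁ i - r₂ i) = 0 := add_eq_left.mp h10
    exact sub_eq_zero.mp (eq_zero_of_X_mul _ _ h11)
  refine ⟨⟨q, b⟩, ⟨hqmem, hbmem, hdiveq⟩, ?_⟩
  rintro ⟨q₂, r₂⟩ ⟨hq₂, hr₂, he₂⟩
  have h13 := uniq q₂ r₂ q b hq₂ hr₂ hqmem hbmem he₂ hdiveq
  exact Prod.ext_iff.mpr ⟨h13.1, funext h13.2⟩
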